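/- Let w = i_1 ⋯ i_r be an element of the free partially commutative monoid M(I, G) associated to a simple graph G on vertex set I. Then w has a unique initial alphabet element counted with multiplicity (i.e., |IA_m(w)| = 1) if and only if i_{r-1} ≠ i_r and for every 1 ≤ k < r, the subgraph of G spanned by the vertices {i_k, i_{k+1}, ..., i_r} is connected. -/

import Mathlib

/-- The commutation relation on the free monoid: two letters may be exchanged
whenever they are not adjacent in `G`. -/
def traceRel {V : Type*} (G : SimpleGraph V) : FreeMonoid V → FreeMonoid V → Prop :=
  fun x y => ∃ a b : V, ¬ G.Adj a b ∧
    x = FreeMonoid.of a * FreeMonoid.of b ∧ y = FreeMonoid.of b * FreeMonoid.of a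

/-- The congruence on the free monoid generated by the commutation relations. -/
def traceCon {V : Type*} (G : SimpleGraph V) : Con (FreeMonoid V) := conGen (traceRel G)

/-- The free partially commutative monoid (trace monoid) `M(I, G)` associated to `G`. -/
abbrev TraceMonoid {V : Type*} (G : SimpleGraph V) := (traceCon G).Quotient

/-- The element of the trace monoid represented by a list of letters. -/
def traceMk {V : Type*} (G : SimpleGraph V) (L : List V) : TraceMonoid G :=
  (traceCon G).mk' (FreeMonoid.ofList L)

/-- The multiplicity of the letter `i` in the initial alphabet multiset `IA_m(w)`:
the largest `m` such that `w = u · iᵐ`. -/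
noncomputable def IAcount {V : Type*} (G : SimpleGraph V) (w : TraceMonoid G) (i : V) : ℕ :=
  sSup {m : ℕ | ∃ u : TraceMonoid G, w = u * (traceMk G [i]) ^ m}

/-- The initial alphabet `IA(w)` of a trace: the set of letters `i` with `w = u · i`. -/
def IAset {V : Type*} (G : SimpleGraph V) (w : TraceMonoid G) : Set V :=
  {i | ∃ u : TraceMonoid G, w = u * traceMk G [i]}

section Aux

open Classical in
/-- number of occurrences of `i` that can be commuted to the end -/
noncomputable def eCount {V : Type*} (G : SimpleGraph V) (i : V) : List V → ℕ
  | [] => 0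
  | c :: t => (if (c = i ∧ ∀ x ∈ t, ¬ G.Adj i x) then 1 else 0) + eCount G i t

variable {V : Type*} (G : SimpleGraph V)

open Classical in
lemma eCount_append (i : V) (x y : List V) :
    eCount G i (x ++ y) = eCount G i y + if (∀ c ∈ y, ¬ G.Adj i c) then eCount G i x else 0 := by
  induction x with
  | nil => simp [eCount]
  | cons c t ih =>
    rw [List.cons_append]
    show (if (c = i ∧ ∀ x ∈ t ++ y, ¬ G.Adj i x) then 1 else 0) + eCount G i (t ++ y) = _
    rw [ih]
    by_cases hy : ∀ c ∈ y, ¬ G.Adj i c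
    · rw [if_pos hy, if_pos hy]
      show _ = eCount G i y + ((if (c = i ∧ ∀ x ∈ t, ¬ G.Adj i x) then 1 else 0) + eCount G i t)
      by_cases hc : c = i ∧ ∀ x ∈ t, ¬ G.Adj i x
      · have hc' : c = i ∧ ∀ x ∈ t ++ y, ¬ G.Adj i x := by
          refine ⟨hc.1, fun x hx => ?_⟩
          rcases List.mem_append.1 hx with h | h
          · exact hc.2 x h
          · exact hy x h
        rw [if_pos hc', if_pos hc]; omega
      · have hc' : ¬ (c = i ∧ ∀ x ∈ t ++ y, ¬ G.Adj i x) := fun h =>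
          hc ⟨h.1, fun x hx => h.2 x (List.mem_append.2 (Or.inl hx))⟩
        rw [if_neg hc', if_neg hc]; omega
    · rw [if_neg hy, if_neg hy]
      have hc' : ¬ (c = i ∧ ∀ x ∈ t ++ y, ¬ G.Adj i x) := fun h =>
        hy (fun x hx => h.2 x (List.mem_append.2 (Or.inr hx)))
      rw [if_neg hc']; omega

end Aux

section Aux2
variable {V : Type*} (G : SimpleGraph V)

open Classical in
lemma eCount_pair (i a b : V) (hab : ¬ G.Adj a b) :
    eCount G i [a, b] = eCount G i [b, a] := by
  have key : ∀ u v : V, eCount G i [u, v]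
      = (if (u = i ∧ ¬ G.Adj i v) then 1 else 0) + (if v = i then 1 else 0) := by
    intro u v
    show (if (u = i ∧ ∀ x ∈ [v], ¬ G.Adj i x) then 1 else 0)
        + ((if (v = i ∧ ∀ x ∈ ([] : List V), ¬ G.Adj i x) then 1 else 0) + 0) = _
    simp
  have hba : ¬ G.Adj b a := fun h => hab h.symm
  have e1 : (a = i ∧ ¬ G.Adj i b) ↔ a = i := ⟨And.left, fun h => ⟨h, h ▸ hab⟩⟩
  have e2 : (b = i ∧ ¬ G.Adj i a) ↔ b = i := ⟨And.left, fun h => ⟨h, h ▸ hba⟩⟩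
  rw [key, key, if_congr e1 rfl rfl, if_congr e2 rfl rfl, add_comm]

lemma pair_nonadj_iff (i a b : V) :
    (∀ c ∈ [a, b], ¬ G.Adj i c) ↔ (∀ c ∈ [b, a], ¬ G.Adj i c) := by
  simp only [List.forall_mem_cons, List.forall_mem_singleton]
  tauto

open Classical in
lemma eCount_invar (i : V) {x y : FreeMonoid V} (h : traceCon G x y) :
    eCount G i (FreeMonoid.toList x) = eCount G i (FreeMonoid.toList y) ∧
      ((∀ c ∈ FreeMonoid.toList x, ¬ G.Adj i c) ↔ ∀ c ∈ FreeMonoid.toList y, ¬ G.Adj i c) := by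
  have h' : ConGen.Rel (traceRel G) x y := h
  clear h
  induction h' with
  | of x y hr =>
    obtain ⟨a, b, hab, hx, hy⟩ := hr
    subst hx; subst hy
    have hta : FreeMonoid.toList (FreeMonoid.of a * FreeMonoid.of b) = [a, b] := rfl
    have htb : FreeMonoid.toList (FreeMonoid.of b * FreeMonoid.of a) = [b, a] := rfl
    rw [hta, htb]
    exact ⟨eCount_pair G i a b hab, pair_nonadj_iff G i a b⟩
  | refl => exact ⟨rfl, Iff.rfl⟩
  | symm _ ih => exact ⟨ih.1.symm, ih.2.symm⟩
  | trans _ _ ih1 ih2 => exact ⟨ih1.1.trans ih2.1, ih1.2.trans ih2.2⟩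
  | mul h1 h2 ih1 ih2 =>
    constructor
    · rw [FreeMonoid.toList_mul, FreeMonoid.toList_mul, eCount_append, eCount_append, ih1.1,
        ih2.1, if_congr ih2.2 rfl rfl]
    · rw [FreeMonoid.toList_mul, FreeMonoid.toList_mul, List.forall_mem_append,
        List.forall_mem_append]
      exact and_congr ih1.2 ih2.2

lemma eCount_eq_of_traceMk_eq (i : V) {L M : List V} (h : traceMk G L = traceMk G M) :
    eCount G i L = eCount G i M := by
  have h' : traceCon G (FreeMonoid.ofList L) (FreeMonoid.ofList M) := by
    rw [traceMk, traceMk] at h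
    exact (Con.eq _).1 h
  simpa using (eCount_invar G i h').1

lemma traceMk_append (A B : List V) :
    traceMk G (A ++ B) = traceMk G A * traceMk G B := by
  rw [traceMk, traceMk, traceMk, ← map_mul]
  rfl

lemma traceMk_replicate (i : V) (m : ℕ) :
    traceMk G (List.replicate m i) = (traceMk G [i]) ^ m := by
  induction m with
  | zero => rw [pow_zero]; rfl
  | succ m ih =>
    have : List.replicate (m + 1) i = [i] ++ List.replicate m i := rfl
    rw [this, traceMk_append, ih, pow_succ']

open Classical in
lemma eCount_replicate (i : V) (m : ℕ) : eCount G i (List.replicate m i) = m := by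
  induction m with
  | zero => rfl
  | succ m ih =>
    have : List.replicate (m + 1) i = i :: List.replicate m i := rfl
    rw [this]
    show (if (i = i ∧ ∀ x ∈ List.replicate m i, ¬ G.Adj i x) then 1 else 0)
      + eCount G i (List.replicate m i) = m + 1
    rw [if_pos ⟨rfl, fun x hx => by rw [List.eq_of_mem_replicate hx]; exact G.loopless.irrefl i⟩, ih]
    omega

lemma traceMk_swap {i c : V} (h : ¬ G.Adj i c) :
    traceMk G [i, c] = traceMk G [c, i] := by
  rw [traceMk, traceMk]
  exact (Con.eq _).2 (ConGen.Rel.of _ _ ⟨i, c, h, rfl, rfl⟩)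

end Aux2

section Aux3
variable {V : Type*} (G : SimpleGraph V)

open Classical in
lemma extract_one (i : V) (L : List V) (h : 1 ≤ eCount G i L) :
    ∃ L', traceMk G L = traceMk G L' * traceMk G [i] ∧ eCount G i L' + 1 = eCount G i L := by
  induction L using List.reverseRecOn with
  | nil => simp [eCount] at h
  | append_singleton M c ih =>
    have hsplit : eCount G i (M ++ [c]) = eCount G i [c]
        + if (∀ x ∈ [c], ¬ G.Adj i x) then eCount G i M else 0 := eCount_append G i M [c]
    have hc1 : eCount G i [c] = if c = i then 1 else 0 := by
      show (if (c = i ∧ ∀ x ∈ ([] : List V), ¬ G.Adj i x) then 1 else 0) + 0 = _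
      simp
    by_cases hci : c = i
    · refine ⟨M, ?_, ?_⟩
      · rw [← traceMk_append, hci]
      · have hB : ∀ x ∈ [c], ¬ G.Adj i x := by
          intro x hx
          simp at hx; subst hx
          rw [hci]
          exact G.loopless.irrefl i
        rw [hsplit, hc1, if_pos hB, if_pos hci]
        omega
    · have hadj : ¬ G.Adj i c := by
        by_contra hadj
        rw [hsplit, hc1, if_neg hci, if_neg (by simp [hadj])] at h
        omega
      have hB : ∀ x ∈ [c], ¬ G.Adj i x := by simpa using hadj
      have hM : 1 ≤ eCount G i M := by
        rw [hsplit, hc1, if_neg hci, if_pos hB] at h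
        omega
      obtain ⟨M', hM', he⟩ := ih hM
      refine ⟨M' ++ [c], ?_, ?_⟩
      · rw [traceMk_append, hM', traceMk_append]
        have : traceMk G [i] * traceMk G [c] = traceMk G [c] * traceMk G [i] := by
          rw [← traceMk_append, ← traceMk_append]
          exact traceMk_swap G hadj
        rw [mul_assoc, this, ← mul_assoc]
      · rw [hsplit, hc1, if_neg hci, if_pos hB,
          eCount_append G i M' [c], hc1, if_neg hci, if_pos hB]
        omega

lemma extract_pow (i : V) (m : ℕ) :
    ∀ L : List V, m ≤ eCount G i L →
      ∃ u : TraceMonoid G, traceMk G L = u * (traceMk G [i]) ^ m := by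
  induction m with
  | zero => exact fun L _ => ⟨traceMk G L, by simp⟩
  | succ m ih =>
    intro L hm
    obtain ⟨L', hL', he⟩ := extract_one G i L (by omega)
    obtain ⟨u, hu⟩ := ih L' (by omega)
    exact ⟨u, by rw [hL', hu, mul_assoc, ← pow_succ]⟩

lemma IAcount_traceMk (i : V) (L : List V) :
    IAcount G (traceMk G L) i = eCount G i L := by
  have hset : {m : ℕ | ∃ u : TraceMonoid G, traceMk G L = u * (traceMk G [i]) ^ m}
      = Set.Iic (eCount G i L) := by
    ext m
    simp only [Set.mem_setOf_eq, Set.mem_Iic]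
    constructor
    · rintro ⟨u, hu⟩
      obtain ⟨x, rfl⟩ := Con.mk'_surjective u
      have hux : (traceCon G).mk' x = traceMk G (FreeMonoid.toList x) := by
        rw [traceMk, FreeMonoid.ofList_toList]
      rw [hux, ← traceMk_replicate, ← traceMk_append] at hu
      have := eCount_eq_of_traceMk_eq G i hu
      rw [eCount_append, eCount_replicate] at this
      rcases le_or_gt m (eCount G i L) with h | h
      · exact h
      · omega
    · intro hm
      exact extract_pow G i m L hm
  rw [IAcount, hset, csSup_Iic]

end Aux3

section Aux4
variable {V : Type*} (G : SimpleGraph V)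

open Classical

open Classical in
/-- count of positions all of whose later letters are non-adjacent -/
noncomputable def cnt (G : SimpleGraph V) : List V → ℕ
  | [] => 0
  | c :: t => (if ∀ x ∈ t, ¬ G.Adj c x then 1 else 0) + cnt G t

/-- head can be commuted past the tail -/
def good (G : SimpleGraph V) : List V → Prop
  | [] => False
  | c :: t => ∀ x ∈ t, ¬ G.Adj c x

open Classical in
lemma sum_eCount [Fintype V] (L : List V) : ∑ i : V, eCount G i L = cnt G L := by
  induction L with
  | nil =>
    show ∑ i : V, eCount G i [] = cnt G []
    simp [eCount, cnt]
  | cons c t ih =>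
    have h1 : ∀ i : V, eCount G i (c :: t)
        = (if (c = i ∧ ∀ x ∈ t, ¬ G.Adj i x) then 1 else 0) + eCount G i t := fun i => by rw [eCount]; try congr!
    have h2 : cnt G (c :: t) = (if ∀ x ∈ t, ¬ G.Adj c x then 1 else 0) + cnt G t := by rw [cnt]; try congr!
    rw [h2, ← ih]
    calc ∑ i : V, eCount G i (c :: t)
        = ∑ i : V, ((if (c = i ∧ ∀ x ∈ t, ¬ G.Adj i x) then 1 else 0) + eCount G i t) := by
          exact Finset.sum_congr rfl (fun i _ => h1 i)
      _ = (∑ i : V, if (c = i ∧ ∀ x ∈ t, ¬ G.Adj i x) then 1 else 0)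
          + ∑ i : V, eCount G i t := Finset.sum_add_distrib
      _ = (if ∀ x ∈ t, ¬ G.Adj c x then 1 else 0) + ∑ i : V, eCount G i t := by
          congr 1
          have hfun : ∀ i : V, (if (c = i ∧ ∀ x ∈ t, ¬ G.Adj i x) then 1 else 0)
              = (if c = i then (if ∀ x ∈ t, ¬ G.Adj c x then (1 : ℕ) else 0) else 0) := by
            intro i
            by_cases hci : c = i
            · subst hci
              simp
            · rw [if_neg hci, if_neg (fun h => hci h.1)]
          rw [Finset.sum_congr rfl (fun i _ => hfun i), Finset.sum_ite_eq,
            if_pos (Finset.mem_univ c)]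

lemma cnt_pos (L : List V) (h : L ≠ []) : 1 ≤ cnt G L := by
  induction L with
  | nil => exact absurd rfl h
  | cons c t ih =>
    have h2 : cnt G (c :: t) = (if ∀ x ∈ t, ¬ G.Adj c x then 1 else 0) + cnt G t := by rw [cnt]; try congr!
    rcases eq_or_ne t [] with rfl | ht
    · rw [h2]
      simp [cnt]
    · have := ih ht
      omega

lemma cnt_two_iff (L : List V) :
    2 ≤ cnt G L ↔ ∃ k < L.length - 1, good G (L.drop k) := by
  induction L with
  | nil => simp [cnt]
  | cons c t ih =>
    have h2 : cnt G (c :: t) = (if ∀ x ∈ t, ¬ G.Adj c x then 1 else 0) + cnt G t := by rw [cnt]; try congr!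
    rcases eq_or_ne t [] with rfl | ht
    · simp only [h2]
      constructor
      · intro h
        simp [cnt] at h
      · rintro ⟨k, hk, -⟩
        simp at hk
    · have hpos := cnt_pos G t ht
      have hlen : 1 ≤ t.length := List.length_pos_iff.2 ht
      constructor
      · intro h
        rw [h2] at h
        by_cases hg : ∀ x ∈ t, ¬ G.Adj c x
        · exact ⟨0, by rw [List.length_cons]; omega, hg⟩
        · have : 2 ≤ cnt G t := by rw [if_neg hg] at h; omega
          obtain ⟨k, hk, hgood⟩ := ih.1 this
          exact ⟨k + 1, by simp; omega, hgood⟩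
      · rintro ⟨k, hk, hgood⟩
        rcases Nat.eq_zero_or_pos k with rfl | hkpos
        · have hg : ∀ x ∈ t, ¬ G.Adj c x := hgood
          rw [h2, if_pos hg]
          omega
        · obtain ⟨j, rfl⟩ := Nat.exists_eq_add_of_lt hkpos
          have hgood' : good G (t.drop j) := by
            simpa [Nat.add_comm] using hgood
          have : 2 ≤ cnt G t := ih.2 ⟨j, by simp at hk; omega, hgood'⟩
          rw [h2]
          omega

lemma good_iff_index (L : List V) (k : ℕ) (h : k < L.length) :
    good G (L.drop k) ↔
      ∀ l (hl : l < L.length), k < l → ¬ G.Adj (L.get ⟨k, h⟩) (L.get ⟨l, hl⟩) := by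
  have hdrop : L.drop k = L[k] :: L.drop (k + 1) := List.drop_eq_getElem_cons h
  rw [hdrop]
  show (∀ x ∈ L.drop (k + 1), ¬ G.Adj L[k] x) ↔ _
  constructor
  · intro hx l hl hkl
    apply hx
    have hj : l - (k + 1) < (L.drop (k + 1)).length := by
      rw [List.length_drop]; omega
    have : (L.drop (k + 1))[l - (k + 1)] = L[(k + 1) + (l - (k + 1))] := List.getElem_drop ..
    have hLl : (L.drop (k + 1))[l - (k + 1)] = L[l] := by
      rw [this]; congr 1; omega
    rw [show L.get ⟨l, hl⟩ = L[l] from rfl, ← hLl]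
    exact List.getElem_mem hj
  · intro hx x hmem
    obtain ⟨j, hj, rfl⟩ := List.mem_iff_getElem.1 hmem
    have hjl : (k + 1) + j < L.length := by
      have := hj; rw [List.length_drop] at this; omega
    have h' : (List.drop (k + 1) L)[j] = L[(k + 1) + j]'hjl := List.getElem_drop ..
    rw [h']
    exact hx ((k + 1) + j) hjl (by omega)

end Aux4

section Aux5
variable {V : Type*} (G : SimpleGraph V)

lemma getElem_mem_drop (L : List V) (j m : ℕ) (h : j + m < L.length) :
    L[j + m] ∈ L.drop j := by
  have h2 : m < (L.drop j).length := by rw [List.length_drop]; omega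
  have e : (L.drop j)[m] = L[j + m] := List.getElem_drop ..
  rw [← e]
  exact List.getElem_mem h2

lemma mem_drop_of_le (L : List V) (j l : ℕ) (hjl : j ≤ l) (hl : l < L.length) :
    L[l] ∈ L.drop j := by
  obtain ⟨m, rfl⟩ := Nat.exists_eq_add_of_le hjl
  exact getElem_mem_drop L j m hl

lemma not_connected_of_isolated (S : Set V) (v u : V) (hv : v ∈ S) (hu : u ∈ S)
    (hne : u ≠ v) (hiso : ∀ y, y ∈ S → ¬ G.Adj v y) :
    ¬ (G.induce S).Connected := by
  intro hconn
  obtain ⟨w⟩ := hconn.preconnected ⟨v, hv⟩ ⟨u, hu⟩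
  cases w with
  | nil => exact hne rfl
  | @cons _ b _ h p => exact hiso b.1 b.2 h

lemma forward_lemma (L : List V) (k : ℕ) (hk : k < L.length - 1) (hg : good G (L.drop k)) :
    (L.get ⟨L.length - 2, by omega⟩ = L.get ⟨L.length - 1, by omega⟩) ∨
      ∃ j < L.length - 1, ¬ (G.induce {x | x ∈ L.drop j}).Connected := by
  have hkl : k < L.length := by omega
  have hidx := (good_iff_index G L k hkl).1 hg
  by_cases hall : ∀ l (hl : l < L.length), k ≤ l → L.get ⟨l, hl⟩ = L.get ⟨k, hkl⟩
  · left
    rw [hall (L.length - 2) (by omega) (by omega), hall (L.length - 1) (by omega) (by omega)]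
  · right
    push_neg at hall
    obtain ⟨l, hl, hkle, hne⟩ := hall
    refine ⟨k, hk, ?_⟩
    apply not_connected_of_isolated G _ (L.get ⟨k, hkl⟩) (L.get ⟨l, hl⟩)
    · exact mem_drop_of_le L k k le_rfl hkl
    · exact mem_drop_of_le L k l hkle hl
    · exact hne
    · intro y hy
      obtain ⟨m, hm, rfl⟩ := List.mem_iff_getElem.1 hy
      have hml : k + m < L.length := by
        have := hm; rw [List.length_drop] at this; omega
      have e : (List.drop k L)[m] = L[k + m]'hml := List.getElem_drop ..
      rw [e]
      rcases Nat.eq_zero_or_pos m with rfl | hm0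
      · have : L[k + 0]'hml = L.get ⟨k, hkl⟩ := by
          congr 1
        rw [this]
        exact G.loopless.irrefl _
      · exact hidx (k + m) hml (by omega)

lemma backward_eq (L : List V) (hL2 : 1 < L.length)
    (heq : L.get ⟨L.length - 2, by omega⟩ = L.get ⟨L.length - 1, by omega⟩) :
    ∃ k < L.length - 1, good G (L.drop k) := by
  refine ⟨L.length - 2, by omega, ?_⟩
  rw [good_iff_index G L (L.length - 2) (by omega)]
  intro l hl hkl
  have hleq : l = L.length - 1 := by omega
  subst hleq
  rw [heq]
  exact G.loopless.irrefl _

open Classical in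
lemma backward_disconn (L : List V) (j : ℕ) (hj : j < L.length - 1)
    (hd : ¬ (G.induce {x | x ∈ L.drop j}).Connected) :
    ∃ k < L.length - 1, good G (L.drop k) := by
  set S : Set V := {x | x ∈ L.drop j} with hS
  have hlen2 : 2 ≤ L.length := by omega
  have hzmem : L[L.length - 1] ∈ S := mem_drop_of_le L j (L.length - 1) (by omega) (by omega)
  set z : S := ⟨L[L.length - 1]'(by omega), hzmem⟩ with hz
  have hne : Nonempty S := ⟨z⟩
  -- there is a vertex not reachable from z
  have hex : ∃ t0 : S, ¬ (G.induce S).Reachable z t0 := by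
    by_contra h
    push_neg at h
    exact hd ⟨fun a b => (h a).symm.trans (h b)⟩
  obtain ⟨t0, ht0⟩ := hex
  -- the set of bad indices
  set K : Finset ℕ := (Finset.range L.length).filter
    (fun l => ∃ h : j ≤ l ∧ l < L.length,
      ¬ (G.induce S).Reachable z ⟨L[l]'h.2, mem_drop_of_le L j l h.1 h.2⟩) with hK
  have hKmem : ∀ l, l ∈ K ↔ ∃ h : j ≤ l ∧ l < L.length,
      ¬ (G.induce S).Reachable z ⟨L[l]'h.2, mem_drop_of_le L j l h.1 h.2⟩ := by
    intro l
    rw [hK, Finset.mem_filter, Finset.mem_range]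
    constructor
    · rintro ⟨-, h⟩; exact h
    · rintro ⟨h, hr⟩; exact ⟨h.2, ⟨h, hr⟩⟩
  have hKne : K.Nonempty := by
    obtain ⟨x, hxS⟩ := t0
    obtain ⟨m, hm, hxval⟩ := List.mem_iff_getElem.1 hxS
    have hml : j + m < L.length := by
      have := hm; rw [List.length_drop] at this; omega
    have e : (List.drop j L)[m] = L[j + m]'hml := List.getElem_drop ..
    refine ⟨j + m, (hKmem (j + m)).2 ⟨⟨by omega, hml⟩, ?_⟩⟩
    intro hr
    apply ht0
    have : (⟨L[j + m]'hml, mem_drop_of_le L j (j + m) (by omega) hml⟩ : S)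
        = ⟨x, hxS⟩ := by
      apply Subtype.ext
      simp only
      rw [← e, hxval]
    rwa [this] at hr
  set k := K.max' hKne with hkdef
  have hkK : k ∈ K := K.max'_mem hKne
  obtain ⟨⟨hjk, hkL⟩, hkreach⟩ := (hKmem k).1 hkK
  have hknot : k ≠ L.length - 1 := by
    intro h
    apply hkreach
    have : (⟨L[k]'hkL, mem_drop_of_le L j k hjk hkL⟩ : S) = z := by
      apply Subtype.ext
      simp only [hz]
      congr 1
    rw [this]
  have hklt : k < L.length - 1 := by omega
  refine ⟨k, hklt, ?_⟩
  rw [good_iff_index G L k hkL]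
  intro l hl hkl
  have hjl : j ≤ l := by omega
  -- l is not in K (it is larger than the max), hence reachable
  have hlnotK : l ∉ K := by
    intro hlK
    have := K.le_max' l hlK
    omega
  have hlreach : (G.induce S).Reachable z ⟨L[l]'hl, mem_drop_of_le L j l hjl hl⟩ := by
    by_contra hr
    exact hlnotK ((hKmem l).2 ⟨⟨hjl, hl⟩, hr⟩)
  intro hadj
  apply hkreach
  refine hlreach.trans (SimpleGraph.Adj.reachable ?_)
  show (G.induce S).Adj ⟨L[l]'hl, _⟩ ⟨L[k]'hkL, _⟩
  exact hadj.symm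

end Aux5

/-- For a nonempty word `w = i₁⋯i_r` in the free partially commutative monoid
`M(I,G)`, the initial alphabet multiset `IA_m(w)` has exactly one element (counted with
multiplicity) iff `i_{r-1} ≠ i_r` and for every `1 ≤ k < r` the subgraph of `G` spanned by
`{i_k, …, i_r}` is connected. -/
theorem stmt6 {V : Type*} [Fintype V] [DecidableEq V] (G : SimpleGraph V)
    (L : List V) (hL : L ≠ []) :
    (∑ i : V, IAcount G (traceMk G L) i) = 1 ↔
      ((∀ h : 2 ≤ L.length,
          L.get ⟨L.length - 2, by omega⟩ ≠ L.get ⟨L.length - 1, by omega⟩) ∧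
        ∀ j < L.length - 1, (G.induce {x | x ∈ L.drop j}).Connected) := by
  have hsum : ∑ i : V, IAcount G (traceMk G L) i = cnt G L := by
    rw [← sum_eCount G L]
    exact Finset.sum_congr rfl fun i _ => IAcount_traceMk G i L
  rw [hsum]
  have h1 := cnt_pos G L hL
  have h2 := cnt_two_iff G L
  constructor
  · intro hc
    have hno : ¬ ∃ k < L.length - 1, good G (L.drop k) := by
      rw [← h2]; omega
    constructor
    · intro hlen2 heq
      exact hno (backward_eq G L hlen2 heq)
    · intro j hj
      by_contra hd
      exact hno (backward_disconn G L j hj hd)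
  · rintro ⟨ha, hb⟩
    have hno : ¬ ∃ k < L.length - 1, good G (L.drop k) := by
      rintro ⟨k, hk, hg⟩
      rcases forward_lemma G L k hk hg with heq | ⟨j, hj, hd⟩
      · exact ha (by omega) heq
      · exact hd (hb j hj)
    rw [← h2] at hno
    omega
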